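/- arXiv:1502.05027 — 3 statements merged into one kernel-verified Lean document; each statement's English description precedes it below -/
import Mathlib

section
/- Let α < β be real numbers and let f : [α, β] × ℝ² → ℝ be twice continuously differentiable. Suppose y : [α, β] → ℝ is continuously differentiable and minimizes the functional F(z) = ∫_α^β f(x, z(x), z'(x)) dx among all continuously differentiable functions z : [α, β] → ℝ with z(α) = y(α) and z(β) = y(β). Then the function x ↦ (∂f/∂y')(x, y(x), y'(x)) is differentiable on [α, β] and the Euler–Lagrange equation (∂f/∂y)(x, y(x), y'(x)) − (d/dx)[(∂f/∂y')(x, y(x), y'(x))] = 0 holds for all x ∈ [α, β]. -/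
open MeasureTheory intervalIntegral

/-- `∂f/∂y`: partial derivative of `f (x, y, y')` with respect to its second argument. -/
noncomputable def pY (f : ℝ → ℝ → ℝ → ℝ) : ℝ → ℝ → ℝ → ℝ :=
  fun x u v => deriv (fun u' => f x u' v) u

/-- `∂f/∂y'`: partial derivative of `f (x, y, y')` with respect to its third argument. -/
noncomputable def pV (f : ℝ → ℝ → ℝ → ℝ) : ℝ → ℝ → ℝ → ℝ :=
  fun x u v => deriv (fun v' => f x u v') v

/-- Chain rule: composition of a function having a derivative within a set with a path
staying in the set. -/
lemma hasDerivAt_comp_path {F : ℝ × ℝ × ℝ → ℝ} {S : Set (ℝ × ℝ × ℝ)}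
    {D : ℝ × ℝ × ℝ →L[ℝ] ℝ} {γ : ℝ → ℝ × ℝ × ℝ} {γ' : ℝ × ℝ × ℝ} {t : ℝ}
    (hF : HasFDerivWithinAt F D S (γ t)) (hγ : HasDerivAt γ γ' t)
    (hmaps : ∀ u, γ u ∈ S) :
    HasDerivAt (F ∘ γ) (D γ') t := by
  have := hF.comp_hasDerivWithinAt t (hγ.hasDerivWithinAt (s := Set.univ)) (fun u _ => hmaps u)
  rwa [hasDerivWithinAt_univ] at this

/-- **Euler–Lagrange equation.** If `f : [α, β] × ℝ² → ℝ` is `C²` and the `C¹` function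
`y` minimizes `F(z) = ∫_α^β f (x, z x, z' x) dx` among `C¹` functions `z` with the same
boundary values, then `x ↦ (∂f/∂y')(x, y x, y' x)` is differentiable on `[α, β]` and
`(∂f/∂y)(x, y x, y' x) - d/dx [(∂f/∂y')(x, y x, y' x)] = 0` on `[α, β]`. -/
theorem euler_lagrange_equation
    (α β : ℝ) (hαβ : α < β) (f : ℝ → ℝ → ℝ → ℝ)
    (hf : ContDiffOn ℝ 2 (fun p : ℝ × ℝ × ℝ => f p.1 p.2.1 p.2.2)
      ((Set.Icc α β) ×ˢ (Set.univ : Set (ℝ × ℝ))))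
    (y : ℝ → ℝ) (hy : ContDiffOn ℝ 1 y (Set.Icc α β))
    (hmin : ∀ z : ℝ → ℝ, ContDiffOn ℝ 1 z (Set.Icc α β) → z α = y α → z β = y β →
      (∫ x in α..β, f x (y x) (derivWithin y (Set.Icc α β) x)) ≤
        (∫ x in α..β, f x (z x) (derivWithin z (Set.Icc α β) x))) :
    DifferentiableOn ℝ
        (fun x => pV f x (y x) (derivWithin y (Set.Icc α β) x)) (Set.Icc α β) ∧
      ∀ x ∈ Set.Icc α β,
        pY f x (y x) (derivWithin y (Set.Icc α β) x) -
          derivWithin (fun x' => pV f x' (y x') (derivWithin y (Set.Icc α β) x'))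
            (Set.Icc α β) x = 0 := by
  set s : Set ℝ := Set.Icc α β with hs_def
  have hs : UniqueDiffOn ℝ s := uniqueDiffOn_Icc hαβ
  set S : Set (ℝ × ℝ × ℝ) := s ×ˢ (Set.univ : Set (ℝ × ℝ)) with hS_def
  have hSuniq : UniqueDiffOn ℝ S := hs.prod uniqueDiffOn_univ
  set Ff : ℝ × ℝ × ℝ → ℝ := fun p => f p.1 p.2.1 p.2.2 with hFf_def
  set D : ℝ × ℝ × ℝ → (ℝ × ℝ × ℝ →L[ℝ] ℝ) := fderivWithin ℝ Ff S with hD_def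
  have hDcont : ContinuousOn D S := hf.continuousOn_fderivWithin hSuniq one_le_two
  have hFd : ∀ p ∈ S, HasFDerivWithinAt Ff (D p) S p :=
    fun p hp => ((hf.differentiableOn two_ne_zero) p hp).hasFDerivWithinAt
  have hmemS : ∀ {x : ℝ}, x ∈ s → ∀ u v : ℝ, (x, u, v) ∈ S := by
    intro x hx u v
    exact ⟨hx, trivial⟩
  -- partial derivatives as evaluations of the full derivative
  have keyY : ∀ {x : ℝ}, x ∈ s → ∀ u v : ℝ,
      HasDerivAt (fun u' => f x u' v) (D (x, u, v) (0, 1, 0)) u := by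
    intro x hx u v
    have hγ : HasDerivAt (fun u' : ℝ => (x, u', v)) ((0 : ℝ), (1 : ℝ), (0 : ℝ)) u :=
      (hasDerivAt_const u x).prodMk ((hasDerivAt_id u).prodMk (hasDerivAt_const u v))
    exact hasDerivAt_comp_path (hFd _ (hmemS hx u v)) hγ (fun u' => hmemS hx u' v)
  have keyV : ∀ {x : ℝ}, x ∈ s → ∀ u v : ℝ,
      HasDerivAt (fun v' => f x u v') (D (x, u, v) (0, 0, 1)) v := by
    intro x hx u v
    have hγ : HasDerivAt (fun v' : ℝ => (x, u, v')) ((0 : ℝ), (0 : ℝ), (1 : ℝ)) v :=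
      (hasDerivAt_const v x).prodMk ((hasDerivAt_const v u).prodMk (hasDerivAt_id v))
    exact hasDerivAt_comp_path (hFd _ (hmemS hx u v)) hγ (fun v' => hmemS hx u v')
  have pY_eq : ∀ {x : ℝ}, x ∈ s → ∀ u v : ℝ, pY f x u v = D (x, u, v) (0, 1, 0) :=
    fun hx u v => (keyY hx u v).deriv
  have pV_eq : ∀ {x : ℝ}, x ∈ s → ∀ u v : ℝ, pV f x u v = D (x, u, v) (0, 0, 1) :=
    fun hx u v => (keyV hx u v).deriv
  have Dlin : ∀ p : ℝ × ℝ × ℝ, ∀ a b : ℝ,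
      D p (0, a, b) = a * D p (0, 1, 0) + b * D p (0, 0, 1) := by
    intro p a b
    have e : ((0 : ℝ), a, b)
        = a • ((0 : ℝ), (1 : ℝ), (0 : ℝ)) + b • ((0 : ℝ), (0 : ℝ), (1 : ℝ)) := by
      simp [Prod.ext_iff]
    rw [e, map_add, _root_.map_smul, _root_.map_smul, smul_eq_mul, smul_eq_mul]
  -- basic continuity facts
  have hycont : ContinuousOn y s := hy.continuousOn
  set Y' : ℝ → ℝ := derivWithin y s with hY'_def
  have hY'cont : ContinuousOn Y' s := (hy.derivWithin hs (m := 0) (by norm_num)).continuousOn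
  have hyd : DifferentiableOn ℝ y s := hy.differentiableOn one_ne_zero
  have hγy : ContinuousOn (fun x => (x, y x, Y' x)) s :=
    continuousOn_id.prodMk (hycont.prodMk hY'cont)
  set P : ℝ → ℝ := fun x => pY f x (y x) (Y' x) with hP_def
  set G : ℝ → ℝ := fun x => pV f x (y x) (Y' x) with hG_def
  have hPcont : ContinuousOn P s := by
    have : ContinuousOn (fun x => D (x, y x, Y' x) ((0 : ℝ), (1 : ℝ), (0 : ℝ))) s :=
      (hDcont.comp hγy fun x hx => hmemS hx _ _).clm_apply continuousOn_const
    exact this.congr fun x hx => pY_eq hx _ _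
  have hGcont : ContinuousOn G s := by
    have : ContinuousOn (fun x => D (x, y x, Y' x) ((0 : ℝ), (0 : ℝ), (1 : ℝ))) s :=
      (hDcont.comp hγy fun x hx => hmemS hx _ _).clm_apply continuousOn_const
    exact this.congr fun x hx => pV_eq hx _ _
  -- continuous extensions of P and G to ℝ
  set Pt : ℝ → ℝ := Set.IccExtend hαβ.le (s.restrict P) with hPt_def
  set Gt : ℝ → ℝ := Set.IccExtend hαβ.le (s.restrict G) with hGt_def
  have hPtcont : Continuous Pt :=
    Continuous.Icc_extend' (continuousOn_iff_continuous_restrict.mp hPcont)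
  have hGtcont : Continuous Gt :=
    Continuous.Icc_extend' (continuousOn_iff_continuous_restrict.mp hGcont)
  have hPt_eq : ∀ x ∈ s, Pt x = P x := fun x hx => by
    rw [hPt_def, Set.IccExtend_of_mem hαβ.le _ hx]; rfl
  have hGt_eq : ∀ x ∈ s, Gt x = G x := fun x hx => by
    rw [hGt_def, Set.IccExtend_of_mem hαβ.le _ hx]; rfl
  -- Q = antiderivative of Pt
  set Q : ℝ → ℝ := fun x => ∫ t in α..x, Pt t with hQ_def
  have hQ : ∀ x, HasDerivAt Q (Pt x) x :=
    fun x => (hPtcont.integral_hasStrictDerivAt α x).hasDerivAt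
  have hQcont : Continuous Q :=
    continuous_iff_continuousAt.mpr fun x => (hQ x).differentiableAt.continuousAt
  -- the constant and the variation
  set ψ : ℝ → ℝ := fun x => Gt x - Q x with hψ_def
  have hψcont : Continuous ψ := hGtcont.sub hQcont
  set c : ℝ := (∫ t in α..β, ψ t) / (β - α) with hc_def
  set h : ℝ → ℝ := fun x => ψ x - c with hh_def
  have hhcont : Continuous h := hψcont.sub continuous_const
  set η : ℝ → ℝ := fun x => ∫ t in α..x, h t with hη_def
  have hη : ∀ x, HasDerivAt η (h x) x :=
    fun x => (hhcont.integral_hasStrictDerivAt α x).hasDerivAt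
  have hηcont : Continuous η :=
    continuous_iff_continuousAt.mpr fun x => (hη x).differentiableAt.continuousAt
  have hηC1 : ContDiff ℝ 1 η := by
    refine contDiff_one_iff_deriv.mpr ⟨fun x => (hη x).differentiableAt, ?_⟩
    have e : deriv η = h := funext fun x => (hη x).deriv
    rw [e]; exact hhcont
  have hηα : η α = 0 := integral_same
  have hβα : β - α ≠ 0 := sub_ne_zero.mpr hαβ.ne'
  have hψint : IntervalIntegrable ψ volume α β := hψcont.intervalIntegrable α β
  have hηβ : η β = 0 := by
    have e : (∫ t in α..β, h t) = (∫ t in α..β, ψ t) - (β - α) • c := by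
      simp only [hh_def]
      rw [intervalIntegral.integral_sub hψint intervalIntegrable_const]
      rw [intervalIntegral.integral_const]
    show (∫ t in α..β, h t) = 0
    rw [e, hc_def, smul_eq_mul]
    field_simp
    ring
  -- derivative of the competitor within s
  have hzderiv : ∀ t : ℝ, ∀ x ∈ s,
      derivWithin (fun x' => y x' + t * η x') s x = Y' x + t * h x := by
    intro t x hx
    have h1 : HasDerivWithinAt y (Y' x) s x := (hyd x hx).hasDerivWithinAt
    have h2 : HasDerivWithinAt (fun x' => t * η x') (t * h x) s x :=
      ((hη x).hasDerivWithinAt).const_mul t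
    exact (h1.add h2).derivWithin (hs x hx)
  -- the function g
  set g : ℝ → ℝ := fun t => ∫ x in α..β, f x (y x + t * η x) (Y' x + t * h x) with hg_def
  have huIcc : Set.uIcc α β = s := Set.uIcc_of_le hαβ.le
  have hg0 : g 0 = ∫ x in α..β, f x (y x) (Y' x) := by
    rw [hg_def]; simp
  have hmin' : ∀ t : ℝ, g 0 ≤ g t := by
    intro t
    have hz : ContDiffOn ℝ 1 (fun x' => y x' + t * η x') s :=
      hy.add ((contDiff_const.mul hηC1).contDiffOn)
    have hzα : y α + t * η α = y α := by rw [hηα]; ring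
    have hzβ : y β + t * η β = y β := by rw [hηβ]; ring
    have hm := hmin (fun x' => y x' + t * η x') hz hzα hzβ
    have e2 : (∫ x in α..β, f x (y x + t * η x)
        (derivWithin (fun x' => y x' + t * η x') s x)) = g t := by
      rw [hg_def]
      refine intervalIntegral.integral_congr fun x hx => ?_
      rw [huIcc] at hx
      rw [hzderiv t x hx]
    rw [hg0]
    rw [e2] at hm
    exact hm
  -- continuity of the integrands
  have hγt : ∀ t : ℝ, ContinuousOn (fun x => (x, y x + t * η x, Y' x + t * h x)) s :=
    fun t => continuousOn_id.prodMk
      ((hycont.add ((continuous_const.mul hηcont).continuousOn)).prodMk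
        (hY'cont.add ((continuous_const.mul hhcont).continuousOn)))
  have hcontF : ∀ t : ℝ, ContinuousOn (fun x => f x (y x + t * η x) (Y' x + t * h x)) s :=
    fun t => hf.continuousOn.comp (hγt t) fun x hx => hmemS hx _ _
  -- bounds
  obtain ⟨C1, hC1⟩ := isCompact_Icc.exists_bound_of_continuousOn hycont
  obtain ⟨C2, hC2⟩ := isCompact_Icc.exists_bound_of_continuousOn hY'cont
  obtain ⟨C3, hC3⟩ := isCompact_Icc.exists_bound_of_continuousOn hηcont.continuousOn
  obtain ⟨C4, hC4⟩ := isCompact_Icc.exists_bound_of_continuousOn hhcont.continuousOn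
  have hαmem : α ∈ s := Set.left_mem_Icc.mpr hαβ.le
  have hC1n : 0 ≤ C1 := le_trans (norm_nonneg _) (hC1 α hαmem)
  have hC2n : 0 ≤ C2 := le_trans (norm_nonneg _) (hC2 α hαmem)
  have hC3n : 0 ≤ C3 := le_trans (norm_nonneg _) (hC3 α hαmem)
  have hC4n : 0 ≤ C4 := le_trans (norm_nonneg _) (hC4 α hαmem)
  set R : ℝ := C1 + C3 + 1 with hR_def
  set R' : ℝ := C2 + C4 + 1 with hR'_def
  set K : Set (ℝ × ℝ × ℝ) := s ×ˢ (Set.Icc (-R) R ×ˢ Set.Icc (-R') R') with hK_def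
  have hKc : IsCompact K := isCompact_Icc.prod (isCompact_Icc.prod isCompact_Icc)
  have hKS : K ⊆ S := fun p hp => ⟨hp.1, trivial⟩
  obtain ⟨M, hM⟩ := hKc.exists_bound_of_continuousOn (hDcont.mono hKS)
  have hMn : 0 ≤ M := by
    refine le_trans (norm_nonneg _) (hM (α, 0, 0) ?_)
    refine ⟨hαmem, ⟨?_, ?_⟩⟩ <;> constructor <;> simp <;> linarith
  have hmemK : ∀ t : ℝ, |t| ≤ 1 → ∀ x ∈ s,
      (x, y x + t * η x, Y' x + t * h x) ∈ K := by
    intro t ht x hx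
    have hy1 := hC1 x hx; have hy2 := hC2 x hx
    have hy3 := hC3 x hx; have hy4 := hC4 x hx
    rw [Real.norm_eq_abs] at hy1 hy2 hy3 hy4
    have e1 : |y x + t * η x| ≤ R := by
      calc |y x + t * η x| ≤ |y x| + |t| * |η x| := by
            rw [← abs_mul]; exact abs_add_le _ _
        _ ≤ C1 + 1 * C3 := add_le_add hy1
            (mul_le_mul ht hy3 (abs_nonneg _) zero_le_one)
        _ ≤ R := by rw [hR_def]; linarith
    have e2 : |Y' x + t * h x| ≤ R' := by
      calc |Y' x + t * h x| ≤ |Y' x| + |t| * |h x| := by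
            rw [← abs_mul]; exact abs_add_le _ _
        _ ≤ C2 + 1 * C4 := add_le_add hy2
            (mul_le_mul ht hy4 (abs_nonneg _) zero_le_one)
        _ ≤ R' := by rw [hR'_def]; linarith
    exact ⟨hx, ⟨abs_le.mp e1, abs_le.mp e2⟩⟩
  have hIoc_sub : Set.uIoc α β ⊆ s := by
    rw [Set.uIoc_of_le hαβ.le]; exact Set.Ioc_subset_Icc_self
  -- continuity of x ↦ D(...) (0, η x, h x) for fixed t
  have hcontF' : ∀ t : ℝ, ContinuousOn
      (fun x => D (x, y x + t * η x, Y' x + t * h x) ((0 : ℝ), η x, h x)) s := by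
    intro t
    have hDγ : ContinuousOn (fun x => D (x, y x + t * η x, Y' x + t * h x)) s :=
      hDcont.comp (hγt t) fun x hx => hmemS hx _ _
    exact hDγ.clm_apply
      (continuousOn_const.prodMk (hηcont.continuousOn.prodMk hhcont.continuousOn))
  -- derivative of g at 0
  have hgderiv : HasDerivAt g
      (∫ x in α..β, D (x, y x + 0 * η x, Y' x + 0 * h x) ((0 : ℝ), η x, h x)) 0 := by
    have main := intervalIntegral.hasDerivAt_integral_of_dominated_loc_of_deriv_le
      (F := fun t x => f x (y x + t * η x) (Y' x + t * h x))
      (F' := fun t x => D (x, y x + t * η x, Y' x + t * h x) ((0 : ℝ), η x, h x))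
      (x₀ := (0:ℝ)) (a := α) (b := β) (μ := volume)
      (bound := fun _ => M * (C3 + C4 + 1)) (s := Metric.ball 0 1)
      (Metric.ball_mem_nhds 0 one_pos)
      (Filter.Eventually.of_forall fun t =>
        (((hcontF t).mono hIoc_sub)).aestronglyMeasurable measurableSet_uIoc)
      (((hcontF 0).mono (huIcc ▸ Set.Subset.rfl)).intervalIntegrable)
      ((((hcontF' 0).mono hIoc_sub)).aestronglyMeasurable measurableSet_uIoc)
      (Filter.Eventually.of_forall ?_)
      intervalIntegrable_const
      (Filter.Eventually.of_forall ?_)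
    · exact main.2
    · -- bound
      intro x hx t ht
      have hxs : x ∈ s := hIoc_sub hx
      have htle : |t| ≤ 1 := le_of_lt (by simpa [Real.norm_eq_abs] using mem_ball_zero_iff.mp ht)
      have hp := hmemK t htle x hxs
      calc ‖D (x, y x + t * η x, Y' x + t * h x) ((0 : ℝ), η x, h x)‖
          ≤ ‖D (x, y x + t * η x, Y' x + t * h x)‖ * ‖((0 : ℝ), η x, h x)‖ :=
            ContinuousLinearMap.le_opNorm _ _
        _ ≤ M * (C3 + C4 + 1) := by
            refine mul_le_mul (hM _ hp) ?_ (norm_nonneg _) hMn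
            have hy3 := hC3 x hxs; have hy4 := hC4 x hxs
            rw [Prod.norm_def, Prod.norm_def]
            simp only [norm_zero]
            refine max_le (by linarith) (max_le (by linarith) (by linarith))
    · -- differentiability in t
      intro x hx t _
      have hxs : x ∈ s := hIoc_sub hx
      have hγ : HasDerivAt (fun t' : ℝ => (x, y x + t' * η x, Y' x + t' * h x))
          ((0 : ℝ), η x, h x) t := by
        refine (hasDerivAt_const t x).prodMk (HasDerivAt.prodMk ?_ ?_)
        · simpa using ((hasDerivAt_id t).mul_const (η x)).const_add (y x)
        · simpa using ((hasDerivAt_id t).mul_const (h x)).const_add (Y' x)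
      exact hasDerivAt_comp_path (hFd _ (hmemS hxs _ _)) hγ (fun u => hmemS hxs _ _)
  -- first variation equals zero
  have hloc : IsLocalMin g 0 := Filter.Eventually.of_forall fun t => hmin' t
  have E0 : (∫ x in α..β, D (x, y x + 0 * η x, Y' x + 0 * h x) ((0 : ℝ), η x, h x)) = 0 :=
    hloc.hasDerivAt_eq_zero hgderiv
  have E1 : (∫ x in α..β, (Pt x * η x + Gt x * h x)) = 0 := by
    rw [← E0]
    refine intervalIntegral.integral_congr fun x hx => ?_
    rw [huIcc] at hx
    have e : (x, y x + 0 * η x, Y' x + 0 * h x) = (x, y x, Y' x) := by norm_num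
    rw [e, Dlin]
    rw [hPt_eq x hx, hGt_eq x hx]
    simp only [hP_def, hG_def, pY_eq hx, pV_eq hx]
    ring
  -- integration by parts
  have hηint : IntervalIntegrable η volume α β := hηcont.intervalIntegrable α β
  have hhint : IntervalIntegrable h volume α β := hhcont.intervalIntegrable α β
  have hPtint : IntervalIntegrable Pt volume α β := hPtcont.intervalIntegrable α β
  have hGtint : IntervalIntegrable Gt volume α β := hGtcont.intervalIntegrable α β
  have hQint : IntervalIntegrable Q volume α β := hQcont.intervalIntegrable α β
  have parts : (∫ x in α..β, Q x * h x)
      = Q β * η β - Q α * η α - ∫ x in α..β, Pt x * η x :=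
    intervalIntegral.integral_mul_deriv_eq_deriv_mul
      (fun x _ => hQ x) (fun x _ => hη x) hPtint hhint
  have parts' : (∫ x in α..β, Q x * h x) = - ∫ x in α..β, Pt x * η x := by
    rw [parts, hηα, hηβ]; ring
  have E2 : (∫ x in α..β, ψ x * h x) = 0 := by
    have e : ∀ x, ψ x * h x = Gt x * h x - Q x * h x := by
      intro x; rw [hψ_def]; ring
    have eint : (∫ x in α..β, ψ x * h x)
        = (∫ x in α..β, Gt x * h x) - ∫ x in α..β, Q x * h x := by
      simp_rw [e]
      exact intervalIntegral.integral_sub (hGtint.mul_continuousOn hhcont.continuousOn)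
        (hQint.mul_continuousOn hhcont.continuousOn)
    have eadd : (∫ x in α..β, (Pt x * η x + Gt x * h x))
        = (∫ x in α..β, Pt x * η x) + ∫ x in α..β, Gt x * h x := by
      exact intervalIntegral.integral_add (hPtint.mul_continuousOn hηcont.continuousOn)
        (hGtint.mul_continuousOn hhcont.continuousOn)
    rw [eint, parts']
    rw [eadd] at E1
    linarith
  have E3 : (∫ x in α..β, h x) = 0 := by
    have e : (∫ x in α..β, h x) = (∫ t in α..β, ψ t) - (β - α) • c := by
      simp only [hh_def]
      rw [intervalIntegral.integral_sub hψint intervalIntegrable_const,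
        intervalIntegral.integral_const]
    rw [e, hc_def, smul_eq_mul]
    field_simp
    ring
  have E4 : (∫ x in α..β, h x * h x) = 0 := by
    have e : ∀ x, h x * h x = ψ x * h x - c * h x := by
      intro x
      have : h x = ψ x - c := rfl
      rw [this]; ring
    have eint : (∫ x in α..β, h x * h x)
        = (∫ x in α..β, ψ x * h x) - ∫ x in α..β, c * h x := by
      simp_rw [e]
      exact intervalIntegral.integral_sub
        ((hψcont.mul hhcont).intervalIntegrable α β)
        ((continuous_const.mul hhcont).intervalIntegrable α β)
    rw [eint, E2, intervalIntegral.integral_const_mul, E3]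
    ring
  -- conclude h = 0 on s
  have hzero : ∀ x ∈ s, h x = 0 := by
    have hnn : 0 ≤ᵐ[volume.restrict (Set.Ioc α β)] fun x => h x * h x :=
      Filter.Eventually.of_forall fun x => mul_self_nonneg _
    have := (intervalIntegral.integral_eq_zero_iff_of_le_of_nonneg_ae hαβ.le hnn
      ((hhcont.mul hhcont).intervalIntegrable α β)).mp E4
    have hae : (fun x => h x * h x) =ᵐ[volume.restrict s] 0 := by
      rwa [hs_def, ← Measure.restrict_congr_set Ioc_ae_eq_Icc]
    have heq := Measure.eqOn_Icc_of_ae_eq (μ := volume) hαβ.ne hae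
      (hhcont.mul hhcont).continuousOn continuousOn_const
    intro x hx
    have := heq hx
    simpa [mul_self_eq_zero] using this
  -- so G = Q + c on s
  have hGQ : ∀ x ∈ s, G x = Q x + c := by
    intro x hx
    have h0 := hzero x hx
    have : ψ x = c := by
      have : ψ x - c = 0 := h0
      linarith
    have : Gt x - Q x = c := this
    rw [← hGt_eq x hx]
    linarith
  -- final conclusion
  have hGd : ∀ x ∈ s, HasDerivWithinAt G (Pt x) s x := by
    intro x hx
    have h1 : HasDerivWithinAt (fun x' => Q x' + c) (Pt x) s x :=
      ((hQ x).hasDerivWithinAt).add_const c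
    exact h1.congr (fun x' hx' => hGQ x' hx') (hGQ x hx)
  constructor
  · intro x hx
    exact ((hGd x hx).differentiableWithinAt)
  · intro x hx
    have e := (hGd x hx).derivWithin (hs x hx)
    rw [hG_def] at e
    rw [e, hPt_eq x hx, hP_def]
    ring
end

section
/- Let α < β be real numbers, let f : [α, β] × ℝ² → ℝ be twice continuously differentiable, let y : [α, β] → ℝ be continuously differentiable and minimize the functional F(z) = ∫_α^β f(x, z(x), z'(x)) dx among all continuously differentiable functions z : [α, β] → ℝ with z(α) = y(α) and z(β) = y(β). Then for every twice continuously differentiable φ : [α, β] → ℝ with φ(α) = φ(β) = 0, one has ∫_α^β [ (∂²f/∂y²)(x, y(x), y'(x)) φ(x)² + 2 (∂²f/∂y∂y')(x, y(x), y'(x)) φ(x) φ'(x) + (∂²f/∂y'²)(x, y(x), y'(x)) φ'(x)² ] dx ≥ 0. -/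
open MeasureTheory intervalIntegral Set Filter Topology

noncomputable def Dfa (α β : ℝ) (f : ℝ → ℝ → ℝ → ℝ) : ℝ × ℝ × ℝ → (ℝ × ℝ × ℝ) →L[ℝ] ℝ :=
  fderivWithin ℝ (fun p : ℝ × ℝ × ℝ => f p.1 p.2.1 p.2.2)
    ((Set.Icc α β) ×ˢ (Set.univ : Set (ℝ × ℝ)))

noncomputable def D2a (α β : ℝ) (f : ℝ → ℝ → ℝ → ℝ) :
    ℝ × ℝ × ℝ → (ℝ × ℝ × ℝ) →L[ℝ] (ℝ × ℝ × ℝ) →L[ℝ] ℝ :=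
  fderivWithin ℝ (Dfa α β f) ((Set.Icc α β) ×ˢ (Set.univ : Set (ℝ × ℝ)))

variable {α β : ℝ} {f : ℝ → ℝ → ℝ → ℝ}

theorem aux_hasDerivAt_line
    (hf : ContDiffOn ℝ 2 (fun p : ℝ × ℝ × ℝ => f p.1 p.2.1 p.2.2)
      ((Set.Icc α β) ×ˢ (Set.univ : Set (ℝ × ℝ))))
    {x : ℝ} (hx : x ∈ Set.Icc α β) {c : ℝ → ℝ × ℝ} {c' : ℝ × ℝ} {t : ℝ}
    (hc : HasDerivAt c c' t) :
    HasDerivAt (fun s => f x (c s).1 (c s).2) (Dfa α β f (x, c t) ((0 : ℝ), c')) t := by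
  have hz : ((x : ℝ), c t) ∈ (Set.Icc α β) ×ˢ (Set.univ : Set (ℝ × ℝ)) := ⟨hx, trivial⟩
  have hd : HasFDerivWithinAt (fun p : ℝ × ℝ × ℝ => f p.1 p.2.1 p.2.2)
      (Dfa α β f (x, c t)) ((Set.Icc α β) ×ˢ (Set.univ : Set (ℝ × ℝ))) (x, c t) :=
    ((hf.differentiableOn two_ne_zero) _ hz).hasFDerivWithinAt
  have hcc : HasDerivAt (fun s => ((x : ℝ), c s)) (((0 : ℝ), c') : ℝ × ℝ × ℝ) t :=
    (hasDerivAt_const t x).prodMk hc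
  have hmaps : Set.MapsTo (fun s : ℝ => ((x : ℝ), c s)) Set.univ
      ((Set.Icc α β) ×ˢ (Set.univ : Set (ℝ × ℝ))) := fun s _ => ⟨hx, trivial⟩
  have := hd.comp_hasDerivWithinAt t hcc.hasDerivWithinAt hmaps
  rw [hasDerivWithinAt_univ] at this
  exact this

theorem aux_hasDerivAt_line_Df (hαβ : α < β)
    (hf : ContDiffOn ℝ 2 (fun p : ℝ × ℝ × ℝ => f p.1 p.2.1 p.2.2)
      ((Set.Icc α β) ×ˢ (Set.univ : Set (ℝ × ℝ))))
    {x : ℝ} (hx : x ∈ Set.Icc α β) {c : ℝ → ℝ × ℝ} {c' : ℝ × ℝ} {t : ℝ}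
    (hc : HasDerivAt c c' t) :
    HasDerivAt (fun s => Dfa α β f (x, c s)) (D2a α β f (x, c t) ((0 : ℝ), c')) t := by
  have hS : UniqueDiffOn ℝ ((Set.Icc α β) ×ˢ (Set.univ : Set (ℝ × ℝ))) :=
    (uniqueDiffOn_Icc hαβ).prod uniqueDiffOn_univ
  have hDfC1 : ContDiffOn ℝ 1 (Dfa α β f) ((Set.Icc α β) ×ˢ (Set.univ : Set (ℝ × ℝ))) :=
    hf.fderivWithin hS (by norm_num)
  have hz : ((x : ℝ), c t) ∈ (Set.Icc α β) ×ˢ (Set.univ : Set (ℝ × ℝ)) := ⟨hx, trivial⟩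
  have hd : HasFDerivWithinAt (Dfa α β f) (D2a α β f (x, c t))
      ((Set.Icc α β) ×ˢ (Set.univ : Set (ℝ × ℝ))) (x, c t) :=
    ((hDfC1.differentiableOn one_ne_zero) _ hz).hasFDerivWithinAt
  have hcc : HasDerivAt (fun s => ((x : ℝ), c s)) (((0 : ℝ), c') : ℝ × ℝ × ℝ) t :=
    (hasDerivAt_const t x).prodMk hc
  have hmaps : Set.MapsTo (fun s : ℝ => ((x : ℝ), c s)) Set.univ
      ((Set.Icc α β) ×ˢ (Set.univ : Set (ℝ × ℝ))) := fun s _ => ⟨hx, trivial⟩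
  have := hd.comp_hasDerivWithinAt t hcc.hasDerivWithinAt hmaps
  rw [hasDerivWithinAt_univ] at this
  exact this


theorem aux_pY_eq
    (hf : ContDiffOn ℝ 2 (fun p : ℝ × ℝ × ℝ => f p.1 p.2.1 p.2.2)
      ((Set.Icc α β) ×ˢ (Set.univ : Set (ℝ × ℝ))))
    {x : ℝ} (hx : x ∈ Set.Icc α β) (u v : ℝ) :
    pY f x u v = Dfa α β f (x, u, v) ((0 : ℝ), (1 : ℝ), (0 : ℝ)) := by
  have h := aux_hasDerivAt_line hf hx (c := fun u' => (u', v)) (c' := ((1 : ℝ), (0 : ℝ)))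
    (t := u) ((hasDerivAt_id u).prodMk (hasDerivAt_const u v))
  exact h.deriv

theorem aux_pV_eq
    (hf : ContDiffOn ℝ 2 (fun p : ℝ × ℝ × ℝ => f p.1 p.2.1 p.2.2)
      ((Set.Icc α β) ×ˢ (Set.univ : Set (ℝ × ℝ))))
    {x : ℝ} (hx : x ∈ Set.Icc α β) (u v : ℝ) :
    pV f x u v = Dfa α β f (x, u, v) ((0 : ℝ), (0 : ℝ), (1 : ℝ)) := by
  have h := aux_hasDerivAt_line hf hx (c := fun v' => (u, v')) (c' := ((0 : ℝ), (1 : ℝ)))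
    (t := v) ((hasDerivAt_const v u).prodMk (hasDerivAt_id v))
  exact h.deriv

theorem aux_pYpV_eq (hαβ : α < β)
    (hf : ContDiffOn ℝ 2 (fun p : ℝ × ℝ × ℝ => f p.1 p.2.1 p.2.2)
      ((Set.Icc α β) ×ˢ (Set.univ : Set (ℝ × ℝ))))
    {x : ℝ} (hx : x ∈ Set.Icc α β) (u v : ℝ) :
    pY (pV f) x u v = D2a α β f (x, u, v) ((0 : ℝ), (1 : ℝ), (0 : ℝ)) ((0 : ℝ), (0 : ℝ), (1 : ℝ)) := by
  have h := aux_hasDerivAt_line_Df hαβ hf hx (c := fun u' => (u', v)) (c' := ((1 : ℝ), (0 : ℝ)))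
    (t := u) ((hasDerivAt_id u).prodMk (hasDerivAt_const u v))
  have h2 := h.clm_apply (hasDerivAt_const u (((0 : ℝ), (0 : ℝ), (1 : ℝ)) : ℝ × ℝ × ℝ))
  simp only [map_zero, add_zero] at h2
  have hfun : (fun u' => pV f x u' v)
      = fun u' => Dfa α β f (x, u', v) ((0 : ℝ), (0 : ℝ), (1 : ℝ)) := by
    funext u'
    exact aux_pV_eq hf hx u' v
  show deriv (fun u' => pV f x u' v) u = _
  rw [hfun]
  exact h2.deriv

theorem aux_pYpY_eq (hαβ : α < β)
    (hf : ContDiffOn ℝ 2 (fun p : ℝ × ℝ × ℝ => f p.1 p.2.1 p.2.2)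
      ((Set.Icc α β) ×ˢ (Set.univ : Set (ℝ × ℝ))))
    {x : ℝ} (hx : x ∈ Set.Icc α β) (u v : ℝ) :
    pY (pY f) x u v = D2a α β f (x, u, v) ((0 : ℝ), (1 : ℝ), (0 : ℝ)) ((0 : ℝ), (1 : ℝ), (0 : ℝ)) := by
  have h := aux_hasDerivAt_line_Df hαβ hf hx (c := fun u' => (u', v)) (c' := ((1 : ℝ), (0 : ℝ)))
    (t := u) ((hasDerivAt_id u).prodMk (hasDerivAt_const u v))
  have h2 := h.clm_apply (hasDerivAt_const u (((0 : ℝ), (1 : ℝ), (0 : ℝ)) : ℝ × ℝ × ℝ))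
  simp only [map_zero, add_zero] at h2
  have hfun : (fun u' => pY f x u' v)
      = fun u' => Dfa α β f (x, u', v) ((0 : ℝ), (1 : ℝ), (0 : ℝ)) := by
    funext u'
    exact aux_pY_eq hf hx u' v
  show deriv (fun u' => pY f x u' v) u = _
  rw [hfun]
  exact h2.deriv

theorem aux_pVpV_eq (hαβ : α < β)
    (hf : ContDiffOn ℝ 2 (fun p : ℝ × ℝ × ℝ => f p.1 p.2.1 p.2.2)
      ((Set.Icc α β) ×ˢ (Set.univ : Set (ℝ × ℝ))))
    {x : ℝ} (hx : x ∈ Set.Icc α β) (u v : ℝ) :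
    pV (pV f) x u v = D2a α β f (x, u, v) ((0 : ℝ), (0 : ℝ), (1 : ℝ)) ((0 : ℝ), (0 : ℝ), (1 : ℝ)) := by
  have h := aux_hasDerivAt_line_Df hαβ hf hx (c := fun v' => (u, v')) (c' := ((0 : ℝ), (1 : ℝ)))
    (t := v) ((hasDerivAt_const v u).prodMk (hasDerivAt_id v))
  have h2 := h.clm_apply (hasDerivAt_const v (((0 : ℝ), (0 : ℝ), (1 : ℝ)) : ℝ × ℝ × ℝ))
  simp only [map_zero, add_zero] at h2
  have hfun : (fun v' => pV f x u v')
      = fun v' => Dfa α β f (x, u, v') ((0 : ℝ), (0 : ℝ), (1 : ℝ)) := by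
    funext v'
    exact aux_pV_eq hf hx u v'
  show deriv (fun v' => pV f x u v') v = _
  rw [hfun]
  exact h2.deriv

theorem aux_symm (hαβ : α < β)
    (hf : ContDiffOn ℝ 2 (fun p : ℝ × ℝ × ℝ => f p.1 p.2.1 p.2.2)
      ((Set.Icc α β) ×ˢ (Set.univ : Set (ℝ × ℝ))))
    {x : ℝ} (hx : x ∈ Set.Icc α β) (u v : ℝ) (a b : ℝ × ℝ × ℝ) :
    D2a α β f (x, u, v) a b = D2a α β f (x, u, v) b a := by
  have hS : UniqueDiffOn ℝ ((Set.Icc α β) ×ˢ (Set.univ : Set (ℝ × ℝ))) :=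
    (uniqueDiffOn_Icc hαβ).prod uniqueDiffOn_univ
  have hz : ((x : ℝ), u, v) ∈ (Set.Icc α β) ×ˢ (Set.univ : Set (ℝ × ℝ)) := ⟨hx, trivial⟩
  have hcl : ((x : ℝ), u, v) ∈
      closure (interior ((Set.Icc α β) ×ˢ (Set.univ : Set (ℝ × ℝ)))) := by
    rw [interior_prod_eq, interior_Icc, interior_univ, closure_prod_eq, closure_Ioo hαβ.ne,
      closure_univ]
    exact ⟨hx, trivial⟩
  have hsymm := (hf _ hz).isSymmSndFDerivWithinAt (by simp [minSmoothness_of_isRCLikeNormedField]) hS hcl hz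
  exact hsymm a b

theorem aux_quad (hαβ : α < β)
    (hf : ContDiffOn ℝ 2 (fun p : ℝ × ℝ × ℝ => f p.1 p.2.1 p.2.2)
      ((Set.Icc α β) ×ˢ (Set.univ : Set (ℝ × ℝ))))
    {x : ℝ} (hx : x ∈ Set.Icc α β) (u v p q : ℝ) :
    D2a α β f (x, u, v) ((0 : ℝ), p, q) ((0 : ℝ), p, q)
      = pY (pY f) x u v * p ^ 2 + 2 * pY (pV f) x u v * p * q
        + pV (pV f) x u v * q ^ 2 := by
  have e : (((0 : ℝ), p, q) : ℝ × ℝ × ℝ)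
      = p • (((0 : ℝ), (1 : ℝ), (0 : ℝ)) : ℝ × ℝ × ℝ)
        + q • (((0 : ℝ), (0 : ℝ), (1 : ℝ)) : ℝ × ℝ × ℝ) := by
    simp [Prod.ext_iff]
  rw [aux_pYpY_eq hαβ hf hx u v, aux_pYpV_eq hαβ hf hx u v, aux_pVpV_eq hαβ hf hx u v, e]
  have hsy := aux_symm hαβ hf hx u v (((0 : ℝ), (0 : ℝ), (1 : ℝ)) : ℝ × ℝ × ℝ)
    (((0 : ℝ), (1 : ℝ), (0 : ℝ)) : ℝ × ℝ × ℝ)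
  simp only [map_add, _root_.map_smul, ContinuousLinearMap.add_apply,
    ContinuousLinearMap.smul_apply, ContinuousLinearMap.coe_smul', Pi.smul_apply,
    smul_eq_mul]
  rw [hsy]
  ring



/-- **Nonnegativity of the second variation.** If `f : [α, β] × ℝ² → ℝ` is `C²` and the
`C¹` function `y` minimizes `F(z) = ∫_α^β f (x, z x, z' x) dx` among `C¹` functions `z`
with the same boundary values, then for every `C²` function `φ` on `[α, β]` with
`φ(α) = φ(β) = 0`,
`∫_α^β [(∂²f/∂y²) φ² + 2 (∂²f/∂y∂y') φ φ' + (∂²f/∂y'²) (φ')²] dx ≥ 0`,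
the partial derivatives of `f` being evaluated at `(x, y x, y' x)`. -/
theorem second_variation_nonneg
    (α β : ℝ) (hαβ : α < β) (f : ℝ → ℝ → ℝ → ℝ)
    (hf : ContDiffOn ℝ 2 (fun p : ℝ × ℝ × ℝ => f p.1 p.2.1 p.2.2)
      ((Set.Icc α β) ×ˢ (Set.univ : Set (ℝ × ℝ))))
    (y : ℝ → ℝ) (hy : ContDiffOn ℝ 1 y (Set.Icc α β))
    (hmin : ∀ z : ℝ → ℝ, ContDiffOn ℝ 1 z (Set.Icc α β) → z α = y α → z β = y β →
      (∫ x in α..β, f x (y x) (derivWithin y (Set.Icc α β) x)) ≤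
        (∫ x in α..β, f x (z x) (derivWithin z (Set.Icc α β) x))) :
    ∀ φ : ℝ → ℝ, ContDiffOn ℝ 2 φ (Set.Icc α β) → φ α = 0 → φ β = 0 →
      (∫ x in α..β,
        pY (pY f) x (y x) (derivWithin y (Set.Icc α β) x) * (φ x) ^ 2
        + 2 * pY (pV f) x (y x) (derivWithin y (Set.Icc α β) x)
            * φ x * derivWithin φ (Set.Icc α β) x
        + pV (pV f) x (y x) (derivWithin y (Set.Icc α β) x)
            * (derivWithin φ (Set.Icc α β) x) ^ 2) ≥ 0 := by
  intro φ hφ hφα hφβ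
  have hle : α ≤ β := hαβ.le
  have hUD : UniqueDiffOn ℝ (Set.Icc α β) := uniqueDiffOn_Icc hαβ
  set v : ℝ → ℝ := derivWithin y (Set.Icc α β) with hv
  set q : ℝ → ℝ := derivWithin φ (Set.Icc α β) with hq
  -- continuity of the data
  have hycont : ContinuousOn y (Set.Icc α β) := hy.continuousOn
  have hφcont : ContinuousOn φ (Set.Icc α β) := hφ.continuousOn
  have hvcont : ContinuousOn v (Set.Icc α β) := hy.continuousOn_derivWithin hUD le_rfl
  have hqcont : ContinuousOn q (Set.Icc α β) := hφ.continuousOn_derivWithin hUD one_le_two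
  set G : ℝ → ℝ → ℝ := fun t x => f x (y x + t * φ x) (v x + t * q x) with hG
  set D : ℝ → ℝ → ℝ := fun t x => (G t x + G (-t) x - 2 * G 0 x) / t ^ 2 with hD
  -- continuity of G t on Icc
  have hGcont : ∀ t : ℝ, ContinuousOn (G t) (Set.Icc α β) := by
    intro t
    have hmap : ∀ x ∈ Set.Icc α β,
        ((x : ℝ), y x + t * φ x, v x + t * q x) ∈
          ((Set.Icc α β) ×ˢ (Set.univ : Set (ℝ × ℝ))) := fun x hx => ⟨hx, trivial⟩
    have hcm : ContinuousOn (fun x : ℝ => ((x : ℝ), y x + t * φ x, v x + t * q x))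
        (Set.Icc α β) :=
      continuousOn_id.prodMk (((hycont.add (hφcont.const_smul t)).prodMk
        (hvcont.add (hqcont.const_smul t))))
    exact (hf.continuousOn.comp hcm hmap : ContinuousOn _ _)
  have hGint : ∀ t : ℝ, IntervalIntegrable (G t) volume α β := by
    intro t
    apply ContinuousOn.intervalIntegrable
    rw [Set.uIcc_of_le hle]
    exact hGcont t
  -- Step A : minimality gives nonnegativity of the symmetric difference integrals
  have hminG : ∀ t : ℝ, (∫ x in α..β, G 0 x) ≤ ∫ x in α..β, G t x := by
    intro t
    set z : ℝ → ℝ := fun x => y x + t * φ x with hzdef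
    have hz : ContDiffOn ℝ 1 z (Set.Icc α β) :=
      hy.add (contDiffOn_const.mul (hφ.of_le one_le_two))
    have hza : z α = y α := by simp [hzdef, hφα]
    have hzβ : z β = y β := by simp [hzdef, hφβ]
    have h1 := hmin z hz hza hzβ
    have e1 : (∫ x in α..β, f x (y x) (derivWithin y (Set.Icc α β) x))
        = ∫ x in α..β, G 0 x := by
      apply intervalIntegral.integral_congr
      intro x hx
      simp [hG, hv]
    have e2 : (∫ x in α..β, f x (z x) (derivWithin z (Set.Icc α β) x))
        = ∫ x in α..β, G t x := by
      apply intervalIntegral.integral_congr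
      intro x hx
      rw [Set.uIcc_of_le hle] at hx
      have hdz : HasDerivWithinAt z (v x + t * q x) (Set.Icc α β) x := by
        have hyx : HasDerivWithinAt y (v x) (Set.Icc α β) x :=
          ((hy.differentiableOn one_ne_zero) x hx).hasDerivWithinAt.congr_deriv rfl
        have hφx : HasDerivWithinAt φ (q x) (Set.Icc α β) x :=
          ((hφ.differentiableOn two_ne_zero) x hx).hasDerivWithinAt.congr_deriv rfl
        exact hyx.add (hφx.const_mul t)
      have : derivWithin z (Set.Icc α β) x = v x + t * q x :=
        hdz.derivWithin (hUD x hx)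
      simp only [this]
      simp [hG, this, hzdef]
    rw [e1] at h1
    rw [e2] at h1
    exact h1
  have hIntD : ∀ t : ℝ, t ≠ 0 → (0 : ℝ) ≤ ∫ x in α..β, D t x := by
    intro t ht
    have e : (∫ x in α..β, D t x)
        = ((∫ x in α..β, G t x) + (∫ x in α..β, G (-t) x) - 2 * ∫ x in α..β, G 0 x) / t ^ 2 := by
      rw [hD]
      rw [intervalIntegral.integral_div]
      congr 1
      rw [intervalIntegral.integral_sub ((hGint t).add (hGint (-t)))
        ((hGint 0).const_mul 2)]
      rw [intervalIntegral.integral_add (hGint t) (hGint (-t))]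
      rw [intervalIntegral.integral_const_mul]
    rw [e]
    apply div_nonneg _ (sq_nonneg t)
    have h1 := hminG t
    have h2 := hminG (-t)
    linarith
  -- derivatives of s ↦ G s x
  have hg : ∀ x ∈ Set.Icc α β, ∀ t : ℝ, HasDerivAt (fun s => G s x)
      (Dfa α β f (x, y x + t * φ x, v x + t * q x) ((0 : ℝ), φ x, q x)) t := by
    intro x hx t
    have hc : HasDerivAt (fun s => (y x + s * φ x, v x + s * q x)) ((φ x, q x)) t := by
      apply HasDerivAt.prodMk
      · exact ((hasDerivAt_const t (y x)).add ((hasDerivAt_id t).mul_const (φ x))).congr_deriv (by simp)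
      · exact ((hasDerivAt_const t (v x)).add ((hasDerivAt_id t).mul_const (q x))).congr_deriv (by simp)
    exact aux_hasDerivAt_line hf hx hc
  have hg1 : ∀ x ∈ Set.Icc α β, ∀ t : ℝ,
      HasDerivAt (fun s => Dfa α β f (x, y x + s * φ x, v x + s * q x) ((0 : ℝ), φ x, q x))
        (D2a α β f (x, y x + t * φ x, v x + t * q x) ((0 : ℝ), φ x, q x) ((0 : ℝ), φ x, q x)) t := by
    intro x hx t
    have hc : HasDerivAt (fun s => (y x + s * φ x, v x + s * q x)) ((φ x, q x)) t := by
      apply HasDerivAt.prodMk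
      · exact ((hasDerivAt_const t (y x)).add ((hasDerivAt_id t).mul_const (φ x))).congr_deriv (by simp)
      · exact ((hasDerivAt_const t (v x)).add ((hasDerivAt_id t).mul_const (q x))).congr_deriv (by simp)
    have h := (aux_hasDerivAt_line_Df hαβ hf hx hc).clm_apply
      (hasDerivAt_const t (((0 : ℝ), φ x, q x) : ℝ × ℝ × ℝ))
    simpa using h
  -- uniform bound
  obtain ⟨M₂, hM₂⟩ : ∃ M₂ : ℝ, ∀ x ∈ Set.Icc α β, ∀ s ∈ Set.Icc (-1 : ℝ) 1,
      ‖D2a α β f (x, y x + s * φ x, v x + s * q x) ((0 : ℝ), φ x, q x) ((0 : ℝ), φ x, q x)‖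
        ≤ M₂ := by
    obtain ⟨C₁, hC₁⟩ := isCompact_Icc.exists_bound_of_continuousOn
      (f := fun x : ℝ => ((y x, v x) : ℝ × ℝ)) (hycont.prodMk hvcont)
    obtain ⟨C₂, hC₂⟩ := isCompact_Icc.exists_bound_of_continuousOn
      (f := fun x : ℝ => ((φ x, q x) : ℝ × ℝ)) (hφcont.prodMk hqcont)
    have hC₂0 : (0 : ℝ) ≤ C₂ :=
      le_trans (norm_nonneg _) (hC₂ α ⟨le_rfl, hle⟩)
    have hS : UniqueDiffOn ℝ ((Set.Icc α β) ×ˢ (Set.univ : Set (ℝ × ℝ))) :=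
      (uniqueDiffOn_Icc hαβ).prod uniqueDiffOn_univ
    have hD2fC : ContinuousOn (D2a α β f) ((Set.Icc α β) ×ˢ (Set.univ : Set (ℝ × ℝ))) :=
      (hf.fderivWithin hS (by norm_num)).continuousOn_fderivWithin hS le_rfl
    set K : Set (ℝ × ℝ × ℝ) := (Set.Icc α β) ×ˢ (Metric.closedBall (0 : ℝ × ℝ) (C₁ + C₂))
      with hKdef
    have hKsub : K ⊆ (Set.Icc α β) ×ˢ (Set.univ : Set (ℝ × ℝ)) := fun z hz => ⟨hz.1, trivial⟩
    have hKcomp : IsCompact K := isCompact_Icc.prod (isCompact_closedBall _ _)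
    obtain ⟨M, hM⟩ := hKcomp.exists_bound_of_continuousOn (f := D2a α β f) (hD2fC.mono hKsub)
    refine ⟨(max M 0) * C₂ * C₂, ?_⟩
    intro x hx s hs
    have hsabs : |s| ≤ 1 := abs_le.2 ⟨hs.1, hs.2⟩
    have hpair : ((y x + s * φ x, v x + s * q x) : ℝ × ℝ)
        = ((y x, v x) : ℝ × ℝ) + s • ((φ x, q x) : ℝ × ℝ) := by
      simp [Prod.ext_iff]
    have hpairnorm : ‖((y x + s * φ x, v x + s * q x) : ℝ × ℝ)‖ ≤ C₁ + C₂ := by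
      rw [hpair]
      refine le_trans (norm_add_le _ _) (add_le_add (hC₁ x hx) ?_)
      rw [norm_smul]
      calc ‖s‖ * ‖((φ x, q x) : ℝ × ℝ)‖ ≤ 1 * C₂ := by
            apply mul_le_mul hsabs (hC₂ x hx) (norm_nonneg _) zero_le_one
        _ = C₂ := one_mul _
    have hzK : ((x : ℝ), y x + s * φ x, v x + s * q x) ∈ K :=
      ⟨hx, Metric.mem_closedBall.2 (by simpa [dist_eq_norm] using hpairnorm)⟩
    have hwnorm : ‖(((0 : ℝ), φ x, q x) : ℝ × ℝ × ℝ)‖ ≤ C₂ := by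
      have : ‖(((0 : ℝ), φ x, q x) : ℝ × ℝ × ℝ)‖ = ‖((φ x, q x) : ℝ × ℝ)‖ := by
        rw [Prod.norm_def]
        simp [max_eq_right (norm_nonneg ((φ x, q x) : ℝ × ℝ))]
      rw [this]
      exact hC₂ x hx
    calc ‖D2a α β f (x, y x + s * φ x, v x + s * q x) ((0 : ℝ), φ x, q x) ((0 : ℝ), φ x, q x)‖
        ≤ ‖D2a α β f (x, y x + s * φ x, v x + s * q x)‖ * ‖(((0 : ℝ), φ x, q x) : ℝ × ℝ × ℝ)‖
          * ‖(((0 : ℝ), φ x, q x) : ℝ × ℝ × ℝ)‖ := ContinuousLinearMap.le_opNorm₂ _ _ _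
      _ ≤ (max M 0) * C₂ * C₂ := by
          have h1 : ‖D2a α β f (x, y x + s * φ x, v x + s * q x)‖ ≤ max M 0 :=
            le_trans (hM _ hzK) (le_max_left _ _)
          have h0 := norm_nonneg (D2a α β f (x, y x + s * φ x, v x + s * q x))
          have h0w := norm_nonneg (((0 : ℝ), φ x, q x) : ℝ × ℝ × ℝ)
          have h0M : (0 : ℝ) ≤ max M 0 := le_max_right _ _
          exact mul_le_mul (mul_le_mul h1 hwnorm h0w h0M) hwnorm h0w
            (mul_nonneg h0M hC₂0)
  have hDbound : ∀ t : ℝ, t ≠ 0 → |t| ≤ 1 → ∀ x ∈ Set.Icc α β, |D t x| ≤ 2 * M₂ := by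
    intro t ht htle x hx
    set g1 : ℝ → ℝ := fun s => Dfa α β f (x, y x + s * φ x, v x + s * q x) ((0 : ℝ), φ x, q x)
      with hg1def
    have hM₂0 : (0 : ℝ) ≤ M₂ :=
      le_trans (norm_nonneg _) (hM₂ x hx 0 ⟨by norm_num, by norm_num⟩)
    -- Lipschitz bound for g1 on [-1, 1]
    have hstep1 : ∀ s ∈ Set.Icc (-1 : ℝ) 1, |g1 s - g1 0| ≤ M₂ * |s| := by
      intro s hs
      have := (convex_Icc (-1 : ℝ) 1).norm_image_sub_le_of_norm_hasDerivWithin_le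
        (f := g1)
        (f' := fun s => D2a α β f (x, y x + s * φ x, v x + s * q x)
          ((0 : ℝ), φ x, q x) ((0 : ℝ), φ x, q x))
        (fun s hs => (hg1 x hx s).hasDerivWithinAt)
        (fun s hs => hM₂ x hx s hs)
        (show (0:ℝ) ∈ Set.Icc (-1:ℝ) 1 from ⟨by norm_num, by norm_num⟩) hs
      simpa [Real.norm_eq_abs] using this
    -- the symmetric difference function
    set h : ℝ → ℝ := fun s => G s x + G (-s) x - 2 * G 0 x with hhdef
    have hh' : ∀ s : ℝ, HasDerivAt h (g1 s + g1 (-s) * (-1)) s := by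
      intro s
      have h1 := hg x hx s
      have h2 : HasDerivAt (fun s' : ℝ => G (-s') x) (g1 (-s) * (-1)) s :=
        (hg x hx (-s)).comp s (hasDerivAt_neg s)
      exact (h1.add h2).sub_const (2 * G 0 x)
    have hJ : ∀ s ∈ Set.Icc (-|t|) (|t|), ‖g1 s + g1 (-s) * (-1)‖ ≤ 2 * M₂ * |t| := by
      intro s hs
      have hsabs : |s| ≤ |t| := abs_le.2 ⟨hs.1, hs.2⟩
      have hs1 : s ∈ Set.Icc (-1 : ℝ) 1 := by
        constructor <;> [linarith [abs_le.1 (le_trans hsabs htle)] ;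
          linarith [abs_le.1 (le_trans hsabs htle)]]
      have hs1' : -s ∈ Set.Icc (-1 : ℝ) 1 := by
        constructor <;> [linarith [hs1.1, hs1.2] ; linarith [hs1.1, hs1.2]]
      have e : g1 s + g1 (-s) * (-1) = (g1 s - g1 0) - (g1 (-s) - g1 0) := by ring
      rw [Real.norm_eq_abs, e]
      calc |(g1 s - g1 0) - (g1 (-s) - g1 0)| ≤ |g1 s - g1 0| + |g1 (-s) - g1 0| :=
            abs_sub _ _
        _ ≤ M₂ * |s| + M₂ * |-s| := add_le_add (hstep1 s hs1) (hstep1 (-s) hs1')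
        _ ≤ M₂ * |t| + M₂ * |t| := by
            rw [abs_neg]
            exact add_le_add (mul_le_mul_of_nonneg_left hsabs hM₂0)
              (mul_le_mul_of_nonneg_left hsabs hM₂0)
        _ = 2 * M₂ * |t| := by ring
    have hmvt := (convex_Icc (-|t|) (|t|)).norm_image_sub_le_of_norm_hasDerivWithin_le
      (f := h) (f' := fun s => g1 s + g1 (-s) * (-1))
      (fun s _ => (hh' s).hasDerivWithinAt) hJ
      (show (0:ℝ) ∈ Set.Icc (-|t|) (|t|) from ⟨neg_nonpos.2 (abs_nonneg t), abs_nonneg t⟩)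
      (show t ∈ Set.Icc (-|t|) (|t|) from ⟨neg_abs_le t, le_abs_self t⟩)
    have hh0 : h 0 = 0 := by simp [hhdef]; ring
    have hht : |h t| ≤ 2 * M₂ * t ^ 2 := by
      have := hmvt
      rw [hh0, sub_zero, sub_zero, Real.norm_eq_abs, Real.norm_eq_abs] at this
      calc |h t| ≤ 2 * M₂ * |t| * |t| := this
        _ = 2 * M₂ * t ^ 2 := by rw [mul_assoc, abs_mul_abs_self]; ring
    have ht2 : (0 : ℝ) < t ^ 2 := by positivity
    have : |D t x| = |h t| / t ^ 2 := by
      rw [hD]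
      simp only [hhdef]
      rw [abs_div, abs_of_pos ht2]
    rw [this]
    rw [div_le_iff₀ ht2]
    calc |h t| ≤ 2 * M₂ * t ^ 2 := hht
      _ = 2 * M₂ * t ^ 2 := rfl
  -- pointwise limit
  have hlim : ∀ x ∈ Set.Icc α β, Tendsto (fun t => D t x) (𝓝[≠] (0 : ℝ))
      (𝓝 (D2a α β f (x, y x, v x) ((0 : ℝ), φ x, q x) ((0 : ℝ), φ x, q x))) := by
    intro x hx
    set g1 : ℝ → ℝ := fun s => Dfa α β f (x, y x + s * φ x, v x + s * q x) ((0 : ℝ), φ x, q x)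
      with hg1def
    set c : ℝ := D2a α β f (x, y x, v x) ((0 : ℝ), φ x, q x) ((0 : ℝ), φ x, q x) with hcdef
    set h : ℝ → ℝ := fun s => G s x + G (-s) x - 2 * G 0 x with hhdef
    have hh' : ∀ s : ℝ, HasDerivAt h (g1 s + g1 (-s) * (-1)) s := by
      intro s
      have h1 := hg x hx s
      have h2 : HasDerivAt (fun s' : ℝ => G (-s') x) (g1 (-s) * (-1)) s :=
        (hg x hx (-s)).comp s (hasDerivAt_neg s)
      exact (h1.add h2).sub_const (2 * G 0 x)
    have hg10 : HasDerivAt g1 c 0 := by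
      have := hg1 x hx 0
      simpa [hcdef] using this
    have hslope : Tendsto (slope g1 0) (𝓝[≠] (0 : ℝ)) (𝓝 c) :=
      hasDerivAt_iff_tendsto_slope.1 hg10
    have hneg : Tendsto (fun t : ℝ => -t) (𝓝[≠] (0 : ℝ)) (𝓝[≠] (0 : ℝ)) := by
      apply tendsto_nhdsWithin_iff.2
      constructor
      · simpa using (continuous_neg.tendsto (0 : ℝ)).mono_left nhdsWithin_le_nhds
      · filter_upwards [self_mem_nhdsWithin] with u hu
        simpa using (neg_ne_zero.2 hu : -u ≠ 0)
    have hslopeneg : Tendsto (fun t => slope g1 0 (-t)) (𝓝[≠] (0 : ℝ)) (𝓝 c) :=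
      hslope.comp hneg
    have hdiv : Tendsto (fun t => (g1 t + g1 (-t) * (-1)) / (2 * t)) (𝓝[≠] (0 : ℝ)) (𝓝 c) := by
      have hsum := (hslope.add hslopeneg).div_const 2
      have hcc : (c + c) / 2 = c := by ring
      rw [hcc] at hsum
      apply hsum.congr'
      filter_upwards [self_mem_nhdsWithin] with u hu
      have hu0 : (u : ℝ) ≠ 0 := hu
      rw [slope_def_field, slope_def_field, sub_zero, show -u - (0 : ℝ) = -u from by ring,
        div_neg, ← sub_eq_add_neg, div_sub_div_same, div_div]
      rw [show g1 u - g1 0 - (g1 (-u) - g1 0) = g1 u + g1 (-u) * (-1) from by ring,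
        show u * 2 = 2 * u from by ring]
    have hfa : Tendsto h (𝓝[≠] (0 : ℝ)) (𝓝 0) := by
      have hcont := (hh' 0).continuousAt.tendsto
      have hh0 : h 0 = 0 := by simp [hhdef]; ring
      rw [hh0] at hcont
      exact hcont.mono_left nhdsWithin_le_nhds
    have hga : Tendsto (fun t : ℝ => t ^ 2) (𝓝[≠] (0 : ℝ)) (𝓝 0) := by
      have := ((continuous_pow 2).tendsto (0 : ℝ)).mono_left
        (nhdsWithin_le_nhds : 𝓝[≠] (0 : ℝ) ≤ 𝓝 0)
      simpa using this
    have := HasDerivAt.lhopital_zero_nhdsNE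
      (f := h) (f' := fun s => g1 s + g1 (-s) * (-1))
      (g := fun t : ℝ => t ^ 2) (g' := fun t : ℝ => 2 * t)
      (Eventually.of_forall hh')
      (Eventually.of_forall (fun t => by simpa using hasDerivAt_pow 2 t))
      (by filter_upwards [self_mem_nhdsWithin] with u hu
          exact mul_ne_zero two_ne_zero hu)
      hfa hga hdiv
    exact this
  -- dominated convergence
  have hDCT : Tendsto (fun t => ∫ x in α..β, D t x) (𝓝[≠] (0 : ℝ))
      (𝓝 (∫ x in α..β,
        pY (pY f) x (y x) (v x) * (φ x) ^ 2
        + 2 * pY (pV f) x (y x) (v x) * φ x * q x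
        + pV (pV f) x (y x) (v x) * (q x) ^ 2)) := by
    have hIoc : Set.uIoc α β = Set.Ioc α β := Set.uIoc_of_le hle
    have hDcont : ∀ t : ℝ, ContinuousOn (D t) (Set.Icc α β) := by
      intro t
      have : ContinuousOn (fun x => G t x + G (-t) x - 2 * G 0 x) (Set.Icc α β) :=
        ((hGcont t).add (hGcont (-t))).sub ((hGcont 0).const_smul (2 : ℝ))
      exact this.div_const _
    apply intervalIntegral.tendsto_integral_filter_of_dominated_convergence
      (bound := fun _ => 2 * M₂)
    · apply Eventually.of_forall
      intro t
      apply ContinuousOn.aestronglyMeasurable _ measurableSet_uIoc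
      rw [hIoc]
      exact (hDcont t).mono Set.Ioc_subset_Icc_self
    · have h1 : ∀ᶠ t in 𝓝 (0 : ℝ), |t| ≤ 1 := by
        filter_upwards [Metric.closedBall_mem_nhds (0 : ℝ) one_pos] with t ht
        simpa [Real.dist_eq] using ht
      filter_upwards [h1.filter_mono nhdsWithin_le_nhds, self_mem_nhdsWithin] with t ht1 ht0
      apply ae_of_all
      intro x hxI
      rw [hIoc] at hxI
      have hx : x ∈ Set.Icc α β := Set.Ioc_subset_Icc_self hxI
      rw [Real.norm_eq_abs]
      exact hDbound t ht0 ht1 x hx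
    · exact intervalIntegrable_const
    · apply ae_of_all
      intro x hxI
      rw [hIoc] at hxI
      have hx : x ∈ Set.Icc α β := Set.Ioc_subset_Icc_self hxI
      have := hlim x hx
      exact (aux_quad hαβ hf hx (y x) (v x) (φ x) (q x)) ▸ this
  refine ge_of_tendsto hDCT ?_
  filter_upwards [self_mem_nhdsWithin] with t ht
  exact hIntD t ht
end

section
/- Let α < β be real numbers and let m, g, ℓ be positive real numbers. Suppose θ : [α, β] → ℝ is twice continuously differentiable and minimizes the action functional A(ψ) = ∫_α^β [ (1/2) m ℓ² ψ'(t)² + m g ℓ cos(ψ(t)) ] dt among all continuously differentiable functions ψ : [α, β] → ℝ with ψ(α) = θ(α) and ψ(β) = θ(β). Then for every twice continuously differentiable φ : [α, β] → ℝ with φ^(k)(α) = φ^(k)(β) = 0 for every k ∈ {0, 1, 2}, one has g ∫_α^β cos(θ(t)) φ(t)² dt ≤ ℓ ∫_α^β φ'(t)² dt. -/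
set_option maxHeartbeats 1000000

open MeasureTheory intervalIntegral Real

lemma aux_sin (y : ℝ) (hy : 0 ≤ y) : y - Real.sin y ≤ 2 * y ^ 3 := by
  rcases eq_or_lt_of_le hy with h | h
  · simp [← h]
  rcases le_or_gt y 1 with h1 | h1
  · nlinarith [Real.sin_gt_sub_cube h, pow_nonneg hy 3]
  · nlinarith [Real.neg_one_le_sin y, mul_pos h h, mul_pos (mul_pos h h) h,
      sq_nonneg (y - 1), mul_pos (mul_pos h h) (sub_pos.2 h1)]

lemma aux_cos_upper (x : ℝ) : Real.cos x ≤ 1 - x ^ 2 / 2 + x ^ 4 := by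
  have h1 : Real.cos x = 1 - 2 * Real.sin (x / 2) ^ 2 := by
    have h := Real.cos_two_mul (x / 2)
    have h2 := Real.sin_sq_add_cos_sq (x / 2)
    rw [show 2 * (x / 2) = x by ring] at h
    linarith
  set y := |x| / 2 with hy
  have hy0 : 0 ≤ y := by positivity
  have hsy : Real.sin (x / 2) ^ 2 = Real.sin y ^ 2 := by
    rcases abs_cases x with ⟨h, _⟩ | ⟨h, _⟩
    · rw [hy, h]
    · rw [hy, h, show -x / 2 = -(x / 2) by ring, Real.sin_neg]; ring
  have hs1 : Real.sin y ≤ y := Real.sin_le hy0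
  have hs2 : y - Real.sin y ≤ 2 * y ^ 3 := aux_sin y hy0
  have hs0 : 0 ≤ Real.sin y + y := by
    rcases le_or_gt 1 y with h | h
    · nlinarith [Real.neg_one_le_sin y]
    · have : 0 ≤ Real.sin y :=
        Real.sin_nonneg_of_nonneg_of_le_pi hy0 (by nlinarith [Real.pi_gt_three])
      linarith
  have key : y ^ 2 - Real.sin y ^ 2 ≤ 4 * y ^ 4 := by
    nlinarith [mul_le_mul hs2 (show Real.sin y + y ≤ 2 * y by linarith) hs0
      (by positivity : (0:ℝ) ≤ 2 * y ^ 3)]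
  have hx2 : y ^ 2 = x ^ 2 / 4 := by rw [hy, div_pow, sq_abs]; norm_num
  have hx4 : y ^ 4 = x ^ 4 / 16 := by
    have h4 : y ^ 4 = (y ^ 2) ^ 2 := by ring
    rw [h4, hx2]; ring
  rw [h1, hsy]
  nlinarith [sq_nonneg x]

lemma aux_pointwise (c x : ℝ) (hc : |c| ≤ 1) :
    c * (Real.cos x - 1) ≤ -(x ^ 2 / 2) * c + x ^ 4 := by
  have h1 : 0 ≤ Real.cos x - 1 + x ^ 2 / 2 := by
    nlinarith [Real.one_sub_sq_div_two_le_cos (x := x)]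
  have h2 : Real.cos x - 1 + x ^ 2 / 2 ≤ x ^ 4 := by nlinarith [aux_cos_upper x]
  have hc' := abs_le.mp hc
  nlinarith [mul_le_mul_of_nonneg_right hc'.2 h1]

/-- **Variational inequality for the simple pendulum.** If `θ` is `C²` on `[α, β]` and
minimizes the action `A(ψ) = ∫_α^β (1/2) m ℓ² ψ'(t)² + m g ℓ cos (ψ t) dt` among `C¹`
paths `ψ` with the same boundary values, then for every `C²` function `φ` on `[α, β]`
with `φ⁽ᵏ⁾(α) = φ⁽ᵏ⁾(β) = 0` for `k ∈ {0, 1, 2}`,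
`g ∫_α^β cos (θ t) φ(t)² dt ≤ ℓ ∫_α^β φ'(t)² dt`. -/
theorem pendulum_variational_inequality
    (α β : ℝ) (hαβ : α < β) (m g ℓ : ℝ) (hm : 0 < m) (hg : 0 < g) (hℓ : 0 < ℓ)
    (θ : ℝ → ℝ) (hθ : ContDiffOn ℝ 2 θ (Set.Icc α β))
    (hmin : ∀ ψ : ℝ → ℝ, ContDiffOn ℝ 1 ψ (Set.Icc α β) → ψ α = θ α → ψ β = θ β →
      (∫ t in α..β, (1 / 2) * m * ℓ ^ 2 * (derivWithin θ (Set.Icc α β) t) ^ 2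
          + m * g * ℓ * Real.cos (θ t)) ≤
        (∫ t in α..β, (1 / 2) * m * ℓ ^ 2 * (derivWithin ψ (Set.Icc α β) t) ^ 2
          + m * g * ℓ * Real.cos (ψ t))) :
    ∀ φ : ℝ → ℝ, ContDiffOn ℝ 2 φ (Set.Icc α β) →
      φ α = 0 → φ β = 0 →
      derivWithin φ (Set.Icc α β) α = 0 → derivWithin φ (Set.Icc α β) β = 0 →
      derivWithin (derivWithin φ (Set.Icc α β)) (Set.Icc α β) α = 0 →
      derivWithin (derivWithin φ (Set.Icc α β)) (Set.Icc α β) β = 0 →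
      g * (∫ t in α..β, Real.cos (θ t) * (φ t) ^ 2) ≤
        ℓ * (∫ t in α..β, (derivWithin φ (Set.Icc α β) t) ^ 2) := by
  intro φ hφ h0a h0b _ _ _ _
  have hle : α ≤ β := hαβ.le
  set s : Set ℝ := Set.Icc α β with hsdef
  have hUD : UniqueDiffOn ℝ s := uniqueDiffOn_Icc hαβ
  have huIcc : Set.uIcc α β = s := Set.uIcc_of_le hle
  set θ' := derivWithin θ s with hθ'def
  set φ' := derivWithin φ s with hφ'def
  have hθd : ∀ t ∈ s, DifferentiableWithinAt ℝ θ s t :=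
    fun t ht => (hθ.differentiableOn (by norm_num)) t ht
  have hφd : ∀ t ∈ s, DifferentiableWithinAt ℝ φ s t :=
    fun t ht => (hφ.differentiableOn (by norm_num)) t ht
  have hθc : ContinuousOn θ s := hθ.continuousOn
  have hφc : ContinuousOn φ s := hφ.continuousOn
  have hθ'c : ContinuousOn θ' s := hθ.continuousOn_derivWithin hUD (by norm_num)
  have hφ'c : ContinuousOn φ' s := hφ.continuousOn_derivWithin hUD (by norm_num)
  have intOf : ∀ f : ℝ → ℝ, ContinuousOn f s → IntervalIntegrable f volume α β := by
    intro f hf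
    apply ContinuousOn.intervalIntegrable
    rw [huIcc]; exact hf
  set K := ∫ t in α..β, Real.cos (θ t) * (φ t) ^ 2 with hKdef
  set I2 := ∫ t in α..β, (φ' t) ^ 2 with hI2def
  set M := ∫ t in α..β, (φ t) ^ 4 with hMdef
  -- the key inequality from the second variation
  have main : ∀ ε : ℝ,
      0 ≤ m * ℓ ^ 2 * ε ^ 2 * I2 - m * g * ℓ * ε ^ 2 * K + 2 * m * g * ℓ * ε ^ 4 * M := by
    intro ε
    -- comparison with perturbed paths
    have B : ∀ δ : ℝ,
        (∫ t in α..β, (1 / 2) * m * ℓ ^ 2 * (θ' t) ^ 2 + m * g * ℓ * Real.cos (θ t)) ≤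
        (∫ t in α..β, (1 / 2) * m * ℓ ^ 2 * (θ' t + δ * φ' t) ^ 2
            + m * g * ℓ * Real.cos (θ t + δ * φ t)) := by
      intro δ
      have hψ : ContDiffOn ℝ 1 (fun t => θ t + δ * φ t) s :=
        (hθ.of_le (by norm_num)).add (contDiffOn_const.mul (hφ.of_le (by norm_num)))
      have hbα : θ α + δ * φ α = θ α := by rw [h0a]; ring
      have hbβ : θ β + δ * φ β = θ β := by rw [h0b]; ring
      have hder : ∀ t ∈ s, derivWithin (fun u => θ u + δ * φ u) s t = θ' t + δ * φ' t := by
        intro t ht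
        rw [derivWithin_fun_add (hθd t ht) ((hφd t ht).const_mul δ),
          derivWithin_const_mul δ (hφd t ht)]
      calc (∫ t in α..β, (1 / 2) * m * ℓ ^ 2 * (θ' t) ^ 2 + m * g * ℓ * Real.cos (θ t))
          ≤ (∫ t in α..β, (1 / 2) * m * ℓ ^ 2
                * (derivWithin (fun u => θ u + δ * φ u) s t) ^ 2
              + m * g * ℓ * Real.cos ((fun u => θ u + δ * φ u) t)) :=
            hmin _ hψ hbα hbβ
        _ = (∫ t in α..β, (1 / 2) * m * ℓ ^ 2 * (θ' t + δ * φ' t) ^ 2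
              + m * g * ℓ * Real.cos (θ t + δ * φ t)) := by
            apply intervalIntegral.integral_congr
            intro t ht
            rw [huIcc] at ht
            simp only
            rw [hder t ht]
    have hBp := B ε
    have hBm := B (-ε)
    -- integrability of the various integrands
    have iL : IntervalIntegrable
        (fun t => (1 / 2) * m * ℓ ^ 2 * (θ' t) ^ 2 + m * g * ℓ * Real.cos (θ t))
        volume α β := intOf _ (by fun_prop)
    have iP : IntervalIntegrable
        (fun t => (1 / 2) * m * ℓ ^ 2 * (θ' t + ε * φ' t) ^ 2
          + m * g * ℓ * Real.cos (θ t + ε * φ t)) volume α β := intOf _ (by fun_prop)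
    have iM : IntervalIntegrable
        (fun t => (1 / 2) * m * ℓ ^ 2 * (θ' t + (-ε) * φ' t) ^ 2
          + m * g * ℓ * Real.cos (θ t + (-ε) * φ t)) volume α β := intOf _ (by fun_prop)
    have iG : IntervalIntegrable
        (fun t => m * ℓ ^ 2 * ε ^ 2 * (φ' t) ^ 2
          + 2 * m * g * ℓ * (Real.cos (θ t) * (Real.cos (ε * φ t) - 1))) volume α β :=
      intOf _ (by fun_prop)
    -- 0 ≤ ∫ G
    have hsum : 0 ≤ ∫ t in α..β, (m * ℓ ^ 2 * ε ^ 2 * (φ' t) ^ 2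
        + 2 * m * g * ℓ * (Real.cos (θ t) * (Real.cos (ε * φ t) - 1))) := by
      have e1 : (∫ t in α..β, ((1 / 2) * m * ℓ ^ 2 * (θ' t + ε * φ' t) ^ 2
            + m * g * ℓ * Real.cos (θ t + ε * φ t)))
          + (∫ t in α..β, ((1 / 2) * m * ℓ ^ 2 * (θ' t + (-ε) * φ' t) ^ 2
            + m * g * ℓ * Real.cos (θ t + (-ε) * φ t)))
          = (∫ t in α..β, (((1 / 2) * m * ℓ ^ 2 * (θ' t + ε * φ' t) ^ 2
              + m * g * ℓ * Real.cos (θ t + ε * φ t))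
            + ((1 / 2) * m * ℓ ^ 2 * (θ' t + (-ε) * φ' t) ^ 2
              + m * g * ℓ * Real.cos (θ t + (-ε) * φ t)))) :=
        (intervalIntegral.integral_add iP iM).symm
      have e2 : (∫ t in α..β, (((1 / 2) * m * ℓ ^ 2 * (θ' t + ε * φ' t) ^ 2
              + m * g * ℓ * Real.cos (θ t + ε * φ t))
            + ((1 / 2) * m * ℓ ^ 2 * (θ' t + (-ε) * φ' t) ^ 2
              + m * g * ℓ * Real.cos (θ t + (-ε) * φ t))))
          = (∫ t in α..β, (2 * ((1 / 2) * m * ℓ ^ 2 * (θ' t) ^ 2 + m * g * ℓ * Real.cos (θ t))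
            + (m * ℓ ^ 2 * ε ^ 2 * (φ' t) ^ 2
              + 2 * m * g * ℓ * (Real.cos (θ t) * (Real.cos (ε * φ t) - 1))))) := by
        apply intervalIntegral.integral_congr
        intro t _
        simp only
        rw [show θ t + (-ε) * φ t = θ t - ε * φ t from by ring, Real.cos_sub, Real.cos_add]
        ring
      have e3 : (∫ t in α..β, (2 * ((1 / 2) * m * ℓ ^ 2 * (θ' t) ^ 2
              + m * g * ℓ * Real.cos (θ t))
            + (m * ℓ ^ 2 * ε ^ 2 * (φ' t) ^ 2
              + 2 * m * g * ℓ * (Real.cos (θ t) * (Real.cos (ε * φ t) - 1)))))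
          = 2 * (∫ t in α..β, ((1 / 2) * m * ℓ ^ 2 * (θ' t) ^ 2 + m * g * ℓ * Real.cos (θ t)))
            + (∫ t in α..β, (m * ℓ ^ 2 * ε ^ 2 * (φ' t) ^ 2
              + 2 * m * g * ℓ * (Real.cos (θ t) * (Real.cos (ε * φ t) - 1)))) := by
        rw [intervalIntegral.integral_add (iL.const_mul 2) iG,
          intervalIntegral.integral_const_mul]
      linarith [hBp, hBm, e1.trans (e2.trans e3)]
    -- ∫ G ≤ ∫ H
    have hGH : (∫ t in α..β, (m * ℓ ^ 2 * ε ^ 2 * (φ' t) ^ 2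
          + 2 * m * g * ℓ * (Real.cos (θ t) * (Real.cos (ε * φ t) - 1))))
        ≤ (∫ t in α..β, (m * ℓ ^ 2 * ε ^ 2 * (φ' t) ^ 2
          + (-(m * g * ℓ * ε ^ 2)) * (Real.cos (θ t) * (φ t) ^ 2)
          + (2 * m * g * ℓ * ε ^ 4) * ((φ t) ^ 4))) := by
      apply intervalIntegral.integral_mono_on hle iG (intOf _ (by fun_prop))
      intro t _
      have hpt := aux_pointwise (Real.cos (θ t)) (ε * φ t) (Real.abs_cos_le_one _)
      nlinarith [mul_le_mul_of_nonneg_left hpt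
        (show (0:ℝ) ≤ 2 * m * g * ℓ by positivity)]
    -- compute ∫ H
    have hH : (∫ t in α..β, (m * ℓ ^ 2 * ε ^ 2 * (φ' t) ^ 2
          + (-(m * g * ℓ * ε ^ 2)) * (Real.cos (θ t) * (φ t) ^ 2)
          + (2 * m * g * ℓ * ε ^ 4) * ((φ t) ^ 4)))
        = m * ℓ ^ 2 * ε ^ 2 * I2 + (-(m * g * ℓ * ε ^ 2)) * K
          + (2 * m * g * ℓ * ε ^ 4) * M := by
      rw [intervalIntegral.integral_add
          (((intOf _ (by fun_prop)).const_mul (m * ℓ ^ 2 * ε ^ 2)).add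
            ((intOf _ (by fun_prop)).const_mul (-(m * g * ℓ * ε ^ 2))))
          ((intOf _ (by fun_prop)).const_mul (2 * m * g * ℓ * ε ^ 4)),
        intervalIntegral.integral_add
          ((intOf _ (by fun_prop)).const_mul (m * ℓ ^ 2 * ε ^ 2))
          ((intOf _ (by fun_prop)).const_mul (-(m * g * ℓ * ε ^ 2))),
        intervalIntegral.integral_const_mul, intervalIntegral.integral_const_mul,
        intervalIntegral.integral_const_mul]
    linarith [hsum, hGH, hH]
  -- conclude by letting ε → 0
  have hM0 : 0 ≤ M := intervalIntegral.integral_nonneg hle (fun t _ => by positivity)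
  have final : ∀ δ : ℝ, 0 < δ → g * K ≤ ℓ * I2 + δ := by
    intro δ hδ
    set e2 := δ / (2 * g * M + 1) with he2def
    have he2 : 0 < e2 := by positivity
    have hε := main (Real.sqrt e2)
    have hsq : Real.sqrt e2 ^ 2 = e2 := Real.sq_sqrt he2.le
    have hsq4 : Real.sqrt e2 ^ 4 = e2 ^ 2 := by
      rw [show Real.sqrt e2 ^ 4 = (Real.sqrt e2 ^ 2) ^ 2 from by ring, hsq]
    rw [hsq, hsq4] at hε
    have h2 : 0 ≤ (m * ℓ * e2) * (ℓ * I2 - g * K + 2 * g * e2 * M) := by linarith [hε]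
    have h3 : 0 ≤ ℓ * I2 - g * K + 2 * g * e2 * M :=
      (mul_nonneg_iff_of_pos_left (show 0 < m * ℓ * e2 by positivity)).mp h2
    have h4 : e2 * (2 * g * M + 1) = δ := by
      rw [he2def]; field_simp
    nlinarith [he2.le, hM0, hg.le]
  exact le_of_forall_pos_le_add final
end
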